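/- For differentiable curves A : ℝ → M₂(ℝ), A(x) = [[α(x), β(x)], [γ(x), δ(x)]], with det A(x) = 1 for all x, define θ(A)(x) ∈ ℝ³ as the column (γδ' - δγ', δα' - αδ' + βγ' - γβ', αβ' - βα')(x), and let B(A)(x) be the 3×3 matrix with rows (δ², -δγ, γ²), (-2βδ, αδ + βγ, -2αγ), (β², -αβ, α²) evaluated at x. Then for any two such curves A₁, A₂ and every x ∈ ℝ: θ(A₁·A₂)(x) = B(A₁)(x)·θ(A₂)(x) + θ(A₁)(x). -/

import Mathlib

open Matrix

/-- The map `B` sends a 2×2 matrix `A = [[α, β], [γ, δ]]` to the 3×3 matrix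
with rows `(δ², -δγ, γ²)`, `(-2βδ, αδ + βγ, -2αγ)`, `(β², -αβ, α²)`. -/
def riccatiRep (A : Matrix (Fin 2) (Fin 2) ℝ) : Matrix (Fin 3) (Fin 3) ℝ :=
  !![(A 1 1) ^ 2, -(A 1 1) * (A 1 0), (A 1 0) ^ 2;
     -2 * (A 0 1) * (A 1 1), (A 0 0) * (A 1 1) + (A 0 1) * (A 1 0),
       -2 * (A 0 0) * (A 1 0);
     (A 0 1) ^ 2, -(A 0 0) * (A 0 1), (A 0 0) ^ 2]

/-- For a curve `A(x) = [[α(x), β(x)], [γ(x), δ(x)]]` of 2×2 matrices, the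
cocycle `θ(A)(x) = (γδ' - δγ', δα' - αδ' + βγ' - γβ', αβ' - βα')(x)`. -/
noncomputable def riccatiCocycle (A : ℝ → Matrix (Fin 2) (Fin 2) ℝ) (x : ℝ) : Fin 3 → ℝ :=
  ![A x 1 0 * deriv (fun t => A t 1 1) x - A x 1 1 * deriv (fun t => A t 1 0) x,
    A x 1 1 * deriv (fun t => A t 0 0) x - A x 0 0 * deriv (fun t => A t 1 1) x
      + A x 0 1 * deriv (fun t => A t 1 0) x - A x 1 0 * deriv (fun t => A t 0 1) x,
    A x 0 0 * deriv (fun t => A t 0 1) x - A x 0 1 * deriv (fun t => A t 0 0) x]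

/-- **`θ` is a 1-cocycle for the representation `B`:** for differentiable
SL(2,ℝ)-valued curves `A₁`, `A₂` and every `x`,
`θ(A₁A₂)(x) = B(A₁(x))·θ(A₂)(x) + θ(A₁)(x)`. -/
theorem riccatiCocycle_mul (A₁ A₂ : ℝ → Matrix (Fin 2) (Fin 2) ℝ)
    (hd₁ : ∀ (i j : Fin 2) (x : ℝ), DifferentiableAt ℝ (fun t => A₁ t i j) x)
    (hd₂ : ∀ (i j : Fin 2) (x : ℝ), DifferentiableAt ℝ (fun t => A₂ t i j) x)
    (hdet₁ : ∀ x : ℝ, (A₁ x).det = 1) (hdet₂ : ∀ x : ℝ, (A₂ x).det = 1) :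
    ∀ x : ℝ,
      riccatiCocycle (fun t => A₁ t * A₂ t) x
        = (riccatiRep (A₁ x)).mulVec (riccatiCocycle A₂ x)
          + riccatiCocycle A₁ x := by
  intro x
  have hmul : ∀ (i j : Fin 2),
      deriv (fun t => A₁ t i 0 * A₂ t 0 j + A₁ t i 1 * A₂ t 1 j) x
        = deriv (fun t => A₁ t i 0) x * A₂ x 0 j + A₁ x i 0 * deriv (fun t => A₂ t 0 j) x
          + (deriv (fun t => A₁ t i 1) x * A₂ x 1 j
              + A₁ x i 1 * deriv (fun t => A₂ t 1 j) x) := by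
    intro i j
    rw [deriv_fun_add ((hd₁ i 0 x).fun_mul (hd₂ 0 j x)) ((hd₁ i 1 x).fun_mul (hd₂ 1 j x)),
      deriv_fun_mul (hd₁ i 0 x) (hd₂ 0 j x), deriv_fun_mul (hd₁ i 1 x) (hd₂ 1 j x)]
  have hdet : A₂ x 0 0 * A₂ x 1 1 - A₂ x 0 1 * A₂ x 1 0 = 1 := by
    have := hdet₂ x; rwa [Matrix.det_fin_two] at this
  funext i
  fin_cases i <;>
    simp only [riccatiCocycle, riccatiRep, Matrix.mulVec, Matrix.mul_apply,
      Fin.sum_univ_two, Fin.sum_univ_three, hmul, Pi.add_apply, dotProduct,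
      Matrix.cons_val_zero, Matrix.cons_val_one, Matrix.head_cons, Matrix.cons_val_two,
      Matrix.cons_val_zero', Matrix.cons_val_succ', Matrix.cons_val_succ,
      Matrix.vecTail, Matrix.vecHead, Matrix.of_apply, Matrix.cons_val',
      Matrix.empty_val', Matrix.cons_val_fin_one, Function.comp, Fin.isValue] <;>
    [linear_combination (A₁ x 1 0 * deriv (fun t => A₁ t 1 1) x
        - A₁ x 1 1 * deriv (fun t => A₁ t 1 0) x) * hdet;
     linear_combination (A₁ x 1 1 * deriv (fun t => A₁ t 0 0) x
        - A₁ x 0 0 * deriv (fun t => A₁ t 1 1) x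
        + A₁ x 0 1 * deriv (fun t => A₁ t 1 0) x
        - A₁ x 1 0 * deriv (fun t => A₁ t 0 1) x) * hdet;
     linear_combination (A₁ x 0 0 * deriv (fun t => A₁ t 0 1) x
        - A₁ x 0 1 * deriv (fun t => A₁ t 0 0) x) * hdet]
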